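/- The degenerate Stirling numbers of the second kind satisfy S_{2,λ}(m,n) = Σ_{l=n}^{m} S₂(l,n) · λ^{m-l} · S₁(m,l) for all m ≥ n ≥ 0. -/

import Mathlib

open Finset PowerSeries

/-- The degenerate falling factorial `(x)_{n,λ}`. -/
noncomputable def df (l x : ℚ) (n : ℕ) : ℚ := ∏ i ∈ Finset.range n, (x - (i : ℚ) * l)

/-- The formal power series `(1+λt)^{x/λ} := Σ (x)_{n,λ} tⁿ/n!`. -/
noncomputable def B (l x : ℚ) : PowerSeries ℚ :=
  PowerSeries.mk fun n => df l x n / n.factorial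

/-- Signed Stirling numbers of the first kind. -/
def S1 : ℕ → ℕ → ℚ
  | 0, 0 => 1
  | 0, _ + 1 => 0
  | _ + 1, 0 => 0
  | n + 1, k + 1 => S1 n k - (n : ℚ) * S1 n (k + 1)

/-- Stirling numbers of the second kind. -/
def S2 : ℕ → ℕ → ℚ
  | 0, 0 => 1
  | 0, _ + 1 => 0
  | _ + 1, 0 => 0
  | n + 1, k + 1 => ((k : ℚ) + 1) * S2 n (k + 1) + S2 n k

lemma df_zero (l x : ℚ) : df l x 0 = 1 := by simp [df]

lemma df_succ (l x : ℚ) (n : ℕ) : df l x (n+1) = df l x n * (x - n * l) := by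
  simp [df, Finset.prod_range_succ]

lemma df_vandermonde (l x y : ℚ) (n : ℕ) :
    df l (x + y) n = ∑ k ∈ range (n+1), (n.choose k : ℚ) * df l x k * df l y (n-k) := by
  induction n with
  | zero => simp [df]
  | succ n ih =>
    rw [df_succ, ih, Finset.sum_mul]
    have key : ∀ k ∈ range (n+1),
        (n.choose k : ℚ) * df l x k * df l y (n-k) * (x + y - n * l)
        = (n.choose k : ℚ) * df l x (k+1) * df l y (n-k)
          + (n.choose k : ℚ) * df l x k * df l y (n-k+1) := by
      intro k hk
      have hk' : k ≤ n := by simpa [Nat.lt_succ_iff] using hk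
      have hcast : ((n - k : ℕ) : ℚ) = (n : ℚ) - k := by
        push_cast [hk']; ring
      rw [df_succ, df_succ, hcast]
      ring
    rw [Finset.sum_congr rfl key, Finset.sum_add_distrib]
    -- RHS: split off k = 0
    rw [Finset.sum_range_succ' (fun k => ((n+1).choose k : ℚ) * df l x k * df l y (n+1-k)) (n+1)]
    have h1 : ∀ k ∈ range (n+1),
        (((n+1).choose (k+1) : ℚ)) * df l x (k+1) * df l y (n+1-(k+1))
        = (n.choose k : ℚ) * df l x (k+1) * df l y (n-k)
          + (n.choose (k+1) : ℚ) * df l x (k+1) * df l y (n-k) := by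
      intro k hk
      have : (n+1).choose (k+1) = n.choose k + n.choose (k+1) := Nat.choose_succ_succ n k
      rw [this, Nat.succ_sub_succ]
      push_cast
      ring
    rw [Finset.sum_congr rfl h1, Finset.sum_add_distrib]
    -- remains: ∑ C(n,k) df x k df y (n-k+1) = ∑ C(n,k+1) df x (k+1) df y (n-k) + f 0
    have h2 : ∑ k ∈ range (n+1), (n.choose k : ℚ) * df l x k * df l y (n-k+1)
        = ∑ k ∈ range (n+1), (n.choose (k+1) : ℚ) * df l x (k+1) * df l y (n-k)
          + ((n+1).choose 0 : ℚ) * df l x 0 * df l y (n+1-0) := by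
      rw [Finset.sum_range_succ' (fun k => (n.choose k : ℚ) * df l x k * df l y (n-k+1)) n]
      simp only [Nat.choose_zero_right, Nat.cast_one, df_zero, Nat.sub_zero]
      congr 1
      · rw [Finset.sum_range_succ]
        have : n.choose (n+1) = 0 := Nat.choose_eq_zero_of_lt (by omega)
        rw [this]
        simp only [Nat.cast_zero, zero_mul, add_zero]
        apply Finset.sum_congr rfl
        intro k hk
        have hk' : k < n := by simpa using hk
        have : n - (k+1) + 1 = n - k := by omega
        rw [this]
    rw [h2]; ring

lemma B_mul (l x y : ℚ) : B l x * B l y = B l (x + y) := by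
  ext n
  rw [PowerSeries.coeff_mul, Finset.Nat.sum_antidiagonal_eq_sum_range_succ_mk]
  simp only [B, PowerSeries.coeff_mk]
  rw [df_vandermonde]
  rw [Finset.sum_div]
  apply Finset.sum_congr rfl
  intro k hk
  have hk' : k ≤ n := by simpa [Nat.lt_succ_iff] using hk
  have hfac : (n.choose k : ℚ) * k.factorial * (n-k).factorial = n.factorial := by
    exact_mod_cast congrArg (Nat.cast : ℕ → ℚ) (Nat.choose_mul_factorial_mul_factorial hk')
  have h1 : (k.factorial : ℚ) ≠ 0 := Nat.cast_ne_zero.mpr k.factorial_ne_zero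
  have h2 : ((n-k).factorial : ℚ) ≠ 0 := Nat.cast_ne_zero.mpr (n-k).factorial_ne_zero
  have h3 : (n.factorial : ℚ) ≠ 0 := Nat.cast_ne_zero.mpr n.factorial_ne_zero
  field_simp
  rw [← hfac]; ring

lemma B_zero (l : ℚ) : B l 0 = 1 := by
  ext n
  simp only [B, PowerSeries.coeff_mk]
  cases n with
  | zero => simp [df]
  | succ n =>
    rw [PowerSeries.coeff_one]
    have : df l 0 (n+1) = 0 := by
      apply Finset.prod_eq_zero (Finset.mem_range.mpr (Nat.succ_pos n))
      simp
    simp [this]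

lemma B_one_pow (l : ℚ) (k : ℕ) : (B l 1) ^ k = B l k := by
  induction k with
  | zero => simpa using (B_zero l).symm
  | succ k ih =>
    rw [pow_succ, ih, B_mul]
    push_cast
    ring_nf

lemma S1_eq_zero {n k : ℕ} (h : n < k) : S1 n k = 0 := by
  induction n generalizing k with
  | zero => cases k with
    | zero => omega
    | succ k => rfl
  | succ n ih =>
    cases k with
    | zero => omega
    | succ k =>
      show S1 n k - (n : ℚ) * S1 n (k+1) = 0
      rw [ih (by omega), ih (by omega)]
      ring

lemma S2_eq_zero {n k : ℕ} (h : n < k) : S2 n k = 0 := by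
  induction n generalizing k with
  | zero => cases k with
    | zero => omega
    | succ k => rfl
  | succ n ih =>
    cases k with
    | zero => omega
    | succ k =>
      show ((k : ℚ) + 1) * S2 n (k + 1) + S2 n k = 0
      rw [ih (by omega), ih (by omega)]
      ring

lemma df_eq_sum_S1 (l x : ℚ) (m : ℕ) :
    df l x m = ∑ j ∈ range (m+1), S1 m j * l ^ (m - j) * x ^ j := by
  induction m with
  | zero => simp [df, S1]
  | succ m ih =>
    rw [df_succ, ih, Finset.sum_mul]
    rw [Finset.sum_range_succ' (fun j => S1 (m+1) j * l ^ (m+1-j) * x ^ j) (m+1)]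
    have h0 : S1 (m+1) 0 * l ^ (m+1-0) * x ^ 0 = 0 := by
      have : S1 (m+1) 0 = 0 := rfl
      rw [this]; ring
    rw [h0, add_zero]
    have hterm : ∀ j ∈ range (m+1),
        S1 m j * l ^ (m-j) * x ^ j * (x - m * l)
        = S1 m j * l ^ (m-j) * x ^ (j+1) - (m : ℚ) * S1 m j * l ^ (m-j+1) * x ^ j := by
      intro j hj
      rw [pow_succ]
      ring
    rw [Finset.sum_congr rfl hterm, Finset.sum_sub_distrib]
    have hR : ∀ k ∈ range (m+1),
        S1 (m+1) (k+1) * l ^ (m+1-(k+1)) * x ^ (k+1)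
        = S1 m k * l ^ (m-k) * x ^ (k+1) - (m:ℚ) * S1 m (k+1) * l ^ (m-k) * x ^ (k+1) := by
      intro k hk
      have : S1 (m+1) (k+1) = S1 m k - (m : ℚ) * S1 m (k+1) := rfl
      rw [this, Nat.succ_sub_succ]
      ring
    rw [Finset.sum_congr rfl hR, Finset.sum_sub_distrib]
    congr 1
    -- ∑_{j∈range (m+1)} m * S1 m j * l^(m-j+1) * x^j = ∑_{k∈range(m+1)} m * S1 m (k+1) * l^(m-k) * x^(k+1)
    rw [Finset.sum_range_succ' (fun j => (m:ℚ) * S1 m j * l ^ (m-j+1) * x ^ j) m]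
    rw [Finset.sum_range_succ (fun k => (m:ℚ) * S1 m (k+1) * l ^ (m-k) * x ^ (k+1)) m]
    have hz1 : (m:ℚ) * S1 m 0 * l ^ (m-0+1) * x ^ 0 = 0 := by
      cases m with
      | zero => simp
      | succ m => have : S1 (m+1) 0 = 0 := rfl; rw [this]; ring
    have hz2 : (m:ℚ) * S1 m (m+1) * l ^ (m-m) * x ^ (m+1) = 0 := by
      rw [S1_eq_zero (by omega)]; ring
    rw [hz1, hz2, add_zero, add_zero]
    apply Finset.sum_congr rfl
    intro k hk
    have hk' : k < m := by simpa using hk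
    have : m - (k+1) + 1 = m - k := by omega
    rw [this]

lemma pascal_step (j n : ℕ) :
    ∑ i ∈ range (n+1), (-1:ℚ)^(i+n) * (n.choose i) * ((i:ℚ)+1)^j
    = (∑ k ∈ range (n+2), (-1:ℚ)^(k+(n+1)) * ((n+1).choose k) * (k:ℚ)^j)
      + ∑ k ∈ range (n+1), (-1:ℚ)^(k+n) * (n.choose k) * (k:ℚ)^j := by
  rw [Finset.sum_range_succ' (fun k => (-1:ℚ)^(k+(n+1)) * ((n+1).choose k) * (k:ℚ)^j) (n+1)]
  have h1 : ∀ i ∈ range (n+1),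
      (-1:ℚ)^(i+1+(n+1)) * ((n+1).choose (i+1)) * ((i+1:ℕ):ℚ)^j
      = (-1:ℚ)^(i+n) * (n.choose i) * ((i:ℚ)+1)^j
        + (-1:ℚ)^(i+n) * (n.choose (i+1)) * ((i:ℚ)+1)^j := by
    intro i hi
    rw [Nat.choose_succ_succ n i]
    have hs : (-1:ℚ)^(i+1+(n+1)) = (-1:ℚ)^(i+n) := by
      have : i+1+(n+1) = (i+n) + 2 := by omega
      rw [this, pow_add]; norm_num
    rw [hs]
    push_cast
    ring
  rw [Finset.sum_congr rfl h1, Finset.sum_add_distrib]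
  have h2 : ∑ i ∈ range (n+1), (-1:ℚ)^(i+n) * (n.choose (i+1)) * ((i:ℚ)+1)^j
      = - ∑ k ∈ range (n+1), (-1:ℚ)^(k+n) * (n.choose k) * (k:ℚ)^j
        + (-1:ℚ)^n * (0:ℚ)^j := by
    rw [Finset.sum_range_succ (fun i => (-1:ℚ)^(i+n) * (n.choose (i+1)) * ((i:ℚ)+1)^j) n]
    rw [Nat.choose_succ_self]
    rw [Finset.sum_range_succ' (fun k => (-1:ℚ)^(k+n) * (n.choose k) * (k:ℚ)^j) n]
    simp only [Nat.cast_zero, Nat.cast_one, Nat.choose_zero_right, Nat.cast_ofNat]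
    rw [neg_add]
    have h3 : ∀ i ∈ range n,
        (-1:ℚ)^(i+n) * (n.choose (i+1)) * ((i:ℚ)+1)^j
        = -((-1:ℚ)^(i+1+n) * (n.choose (i+1)) * ((i+1:ℕ):ℚ)^j) := by
      intro i hi
      have : (-1:ℚ)^(i+1+n) = -(-1:ℚ)^(i+n) := by rw [show i+1+n = (i+n)+1 from by omega, pow_succ]; ring
      rw [this]; push_cast; ring
    rw [Finset.sum_congr rfl h3, ← Finset.sum_neg_distrib]
    push_cast
    ring
  rw [h2]
  have hz : (-1:ℚ)^(0+(n+1)) * (((n+1).choose 0 : ℕ):ℚ) * ((0:ℕ):ℚ)^j = -((-1:ℚ)^n * (0:ℚ)^j) := by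
    simp only [Nat.choose_zero_right, Nat.cast_one, Nat.cast_zero, zero_add, mul_one]
    rw [pow_succ]
    ring
  rw [hz]
  ring

lemma inv_sum (j : ℕ) : ∀ n : ℕ,
    ∑ k ∈ range (n+1), (-1:ℚ)^(k+n) * (n.choose k) * (k:ℚ)^j
    = (n.factorial : ℚ) * S2 j n := by
  induction j with
  | zero =>
    intro n
    cases n with
    | zero => simp [S2]
    | succ n =>
      have : S2 0 (n+1) = 0 := rfl
      rw [this, mul_zero]
      have := Int.alternating_sum_range_choose (n := n+1)
      have h0 : ((n+1 : ℕ) = 0) = False := by simp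
      rw [if_neg (by omega)] at this
      have hQ : ∑ i ∈ range (n+2), (-1:ℚ)^i * ((n+1).choose i) = 0 := by
        exact_mod_cast congrArg (Int.cast : ℤ → ℚ) this
      calc ∑ k ∈ range (n+2), (-1:ℚ)^(k+(n+1)) * ((n+1).choose k) * (k:ℚ)^0
          = (-1:ℚ)^(n+1) * ∑ i ∈ range (n+2), (-1:ℚ)^i * ((n+1).choose i) := by
            rw [Finset.mul_sum]
            apply Finset.sum_congr rfl
            intro k hk
            rw [pow_add]
            ring
        _ = 0 := by rw [hQ, mul_zero]
  | succ j ih =>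
    intro n
    cases n with
    | zero =>
      have h : S2 (j+1) 0 = 0 := rfl
      simp [h]
    | succ n =>
      rw [Finset.sum_range_succ' (fun k => (-1:ℚ)^(k+(n+1)) * ((n+1).choose k) * (k:ℚ)^(j+1)) (n+1)]
      have h0 : (-1:ℚ)^(0+(n+1)) * (((n+1).choose 0:ℕ):ℚ) * ((0:ℕ):ℚ)^(j+1) = 0 := by
        simp
      rw [h0, add_zero]
      have h1 : ∀ i ∈ range (n+1),
          (-1:ℚ)^(i+1+(n+1)) * (((n+1).choose (i+1):ℕ):ℚ) * ((i+1:ℕ):ℚ)^(j+1)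
          = ((n:ℚ)+1) * ((-1:ℚ)^(i+n) * (n.choose i) * ((i:ℚ)+1)^j) := by
        intro i hi
        have hc : ((n+1:ℕ):ℚ) * (n.choose i) = (((n+1).choose (i+1):ℕ):ℚ) * ((i+1:ℕ):ℚ) := by
          exact_mod_cast congrArg (Nat.cast : ℕ → ℚ) (Nat.add_one_mul_choose_eq n i)
        have hs : (-1:ℚ)^(i+1+(n+1)) = (-1:ℚ)^(i+n) := by
          rw [show i+1+(n+1) = (i+n)+2 from by omega, pow_add]; norm_num
        rw [hs, pow_succ]
        push_cast at hc ⊢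
        linear_combination (-((-1:ℚ)^(i+n) * ((i:ℚ)+1)^j)) * hc
      rw [Finset.sum_congr rfl h1, ← Finset.mul_sum, pascal_step j n, ih (n+1), ih n]
      have hS : S2 (j+1) (n+1) = ((n:ℚ)+1) * S2 j (n+1) + S2 j n := rfl
      rw [hS]
      have hf : ((n+1).factorial : ℚ) = ((n:ℚ)+1) * (n.factorial : ℚ) := by
        rw [Nat.factorial_succ]; push_cast; ring
      rw [hf]
      ring

/-- If `S2l` are the degenerate Stirling numbers of the second kind, defined by
`(1/n!)((1+λt)^{1/λ} - 1)^n = Σ_{m≥n} S_{2,λ}(m,n) tᵐ/m!`, then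
`S_{2,λ}(m,n) = Σ_{l=n}^m S₂(l,n) λ^{m-l} S₁(m,l)` for `m ≥ n`. -/
theorem stmt11 (l : ℚ) (S2l : ℕ → ℕ → ℚ)
    (hS : ∀ n : ℕ, (B l 1 - 1) ^ n
      = (n.factorial : ℚ) • PowerSeries.mk fun m => S2l m n / m.factorial) :
    ∀ m n : ℕ, n ≤ m →
      S2l m n = ∑ j ∈ Finset.Icc n m, S2 j n * l ^ (m - j) * S1 m j := by
  intro m n hmn
  have hm : ((m.factorial : ℚ)) ≠ 0 := Nat.cast_ne_zero.mpr m.factorial_ne_zero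
  have hn : ((n.factorial : ℚ)) ≠ 0 := Nat.cast_ne_zero.mpr n.factorial_ne_zero
  have expand : (B l 1 - 1)^n
      = ∑ k ∈ range (n+1), (PowerSeries.C ((-1:ℚ)^(k+n) * (n.choose k))) * B l k := by
    rw [sub_pow]
    apply Finset.sum_congr rfl
    intro k hk
    rw [one_pow, B_one_pow]
    have h1 : ((-1 : PowerSeries ℚ))^(k+n) = PowerSeries.C ((-1:ℚ)^(k+n)) := by
      rw [map_pow, map_neg, map_one]
    have h2 : ((n.choose k : ℕ) : PowerSeries ℚ) = PowerSeries.C ((n.choose k : ℕ) : ℚ) := by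
      rw [map_natCast]
    rw [h1, h2, map_mul]
    ring
  have hco := congrArg (PowerSeries.coeff m) (hS n)
  rw [expand, map_sum, PowerSeries.coeff_smul] at hco
  simp only [PowerSeries.coeff_C_mul, B, PowerSeries.coeff_mk, smul_eq_mul] at hco
  -- hco : ∑ k, (-1)^(k+n) * C(n,k) * (df l k m / m!) = n! * (S2l m n / m!)
  field_simp at hco
  have hco' : (∑ k ∈ range (n+1), (-1:ℚ)^(k+n) * (n.choose k) * df l k m)
      = (n.factorial : ℚ) * S2l m n := by
    rw [← hco, Finset.mul_sum]
    apply Finset.sum_congr rfl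
    intro k _
    field_simp
  have key : S2l m n
      = (∑ k ∈ range (n+1), (-1:ℚ)^(k+n) * (n.choose k) * df l k m) / (n.factorial : ℚ) := by
    rw [hco', mul_div_cancel_left₀ _ hn]
  rw [key]
  have swap : ∑ k ∈ range (n+1), (-1:ℚ)^(k+n) * (n.choose k) * df l k m
      = ∑ j ∈ range (m+1), S1 m j * l ^ (m-j) * ((n.factorial : ℚ) * S2 j n) := by
    have h1 : ∀ k ∈ range (n+1), (-1:ℚ)^(k+n) * (n.choose k) * df l k m
        = ∑ j ∈ range (m+1), S1 m j * l ^ (m-j) * ((-1:ℚ)^(k+n) * (n.choose k) * (k:ℚ)^j) := by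
      intro k hk
      rw [df_eq_sum_S1, Finset.mul_sum]
      apply Finset.sum_congr rfl
      intro j hj
      ring
    rw [Finset.sum_congr rfl h1, Finset.sum_comm]
    apply Finset.sum_congr rfl
    intro j hj
    rw [← Finset.mul_sum, inv_sum j n]
  rw [swap]
  have step : (∑ j ∈ range (m+1), S1 m j * l ^ (m-j) * ((n.factorial : ℚ) * S2 j n))
      / (n.factorial : ℚ) = ∑ j ∈ range (m+1), S2 j n * l ^ (m-j) * S1 m j := by
    rw [Finset.sum_div]
    apply Finset.sum_congr rfl
    intro j hj
    field_simp
  rw [step]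
  symm
  apply Finset.sum_subset
  · intro j hj
    simp only [Finset.mem_Icc] at hj
    exact Finset.mem_range.mpr (by omega)
  · intro j hj hj'
    simp only [Finset.mem_range] at hj
    simp only [Finset.mem_Icc] at hj'
    have : j < n := by omega
    rw [S2_eq_zero this]
    ring
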